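/- arXiv:2404.11306 — 3 statements merged into one kernel-verified Lean document; each statement's English description precedes it below -/
import Mathlib

section
/- For every positive integer d, every real x, and every k ∈ {0,...,d−1}: ∑_{k=0}^{d-1} sins_d²(x − k) = 1, i.e. the POVM elements of phase estimation sum to the identity eigenvalue-wise. -/
open Real Classical

/-- `sins d x = sin(πx)/(d sin(πx/d))` for `x` not a multiple of `d`, and `±1`
(here normalized to `1`, the square being `1`) at multiples of `d`. -/
noncomputable def sins (d : ℕ) (x : ℝ) : ℝ :=
  if ∃ m : ℤ, x = (m : ℝ) * d then 1
  else Real.sin (Real.pi * x) / (d * Real.sin (Real.pi * x / d))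

private lemma normSq_exp_sub_one (θ : ℝ) :
    Complex.normSq (Complex.exp (θ * Complex.I) - 1) = 4 * Real.sin (θ/2) ^ 2 := by
  have h : Complex.exp (θ * Complex.I) - 1
      = Complex.ofReal (Real.cos θ - 1) + Complex.ofReal (Real.sin θ) * Complex.I := by
    rw [Complex.exp_mul_I]
    push_cast [Complex.ofReal_cos, Complex.ofReal_sin]
    ring
  rw [h, Complex.normSq_add_mul_I]
  have h2 : Real.cos θ = 2 * Real.cos (θ/2)^2 - 1 := by
    have := Real.cos_two_mul (θ/2); rw [show 2*(θ/2) = θ by ring] at this; linarith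
  nlinarith [Real.sin_sq_add_cos_sq θ, Real.sin_sq_add_cos_sq (θ/2)]

private lemma exp_real_eq_one (r : ℝ) (h : Complex.exp (r * Complex.I) = 1) :
    ∃ n : ℤ, r = 2 * π * n := by
  rw [Complex.exp_eq_one_iff] at h
  obtain ⟨n, hn⟩ := h
  refine ⟨n, ?_⟩
  have : (r : ℂ) = ((2 * π * n : ℝ) : ℂ) := by
    apply mul_right_cancel₀ Complex.I_ne_zero
    rw [hn]; push_cast; ring
  exact_mod_cast this

/-- The unnormalized phase-estimation amplitude. -/
noncomputable def gsum (d : ℕ) (y : ℝ) : ℂ :=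
  ∑ j ∈ Finset.range d, Complex.exp (((2 * π * y * j / d : ℝ)) * Complex.I)

private lemma sins_sq_eq (d : ℕ) (hd : 0 < d) (y : ℝ) :
    (d : ℝ)^2 * (sins d y)^2 = Complex.normSq (gsum d y) := by
  have hdR : (d : ℝ) ≠ 0 := Nat.cast_ne_zero.mpr hd.ne'
  have hdC : (d : ℂ) ≠ 0 := Nat.cast_ne_zero.mpr hd.ne'
  have hπ : π ≠ 0 := Real.pi_ne_zero
  by_cases hy : ∃ m : ℤ, y = (m : ℝ) * d
  · obtain ⟨m, rfl⟩ := hy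
    have h1 : ∀ j ∈ Finset.range d,
        Complex.exp (((2 * π * ((m:ℝ) * d) * j / d : ℝ)) * Complex.I) = 1 := by
      intro j _
      rw [show ((2 * π * ((m:ℝ) * d) * j / d : ℝ) : ℂ) * Complex.I
          = ((m * j : ℤ) : ℂ) * (2 * π * Complex.I) by push_cast; field_simp]
      exact Complex.exp_int_mul_two_pi_mul_I _
    have : gsum d ((m : ℝ) * d) = (d : ℂ) := by
      rw [gsum, Finset.sum_congr rfl h1]; simp
    rw [this, sins, if_pos ⟨m, rfl⟩]
    simp [Complex.normSq_natCast]
    ring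
  · set ω : ℂ := Complex.exp (((2 * π * y / d : ℝ)) * Complex.I) with hω
    have hterm : ∀ j : ℕ, Complex.exp (((2 * π * y * j / d : ℝ)) * Complex.I) = ω ^ j := by
      intro j
      rw [hω, ← Complex.exp_nat_mul]
      congr 1
      push_cast; ring
    have hω1 : ω ≠ 1 := by
      intro h
      obtain ⟨n, hn⟩ := exp_real_eq_one _ h
      apply hy
      refine ⟨n, ?_⟩
      field_simp at hn
      have h2 : (2*π) * y = (2*π) * ((n:ℝ)*d) := by rw [hn]; ring
      exact mul_left_cancel₀ (by positivity) h2
    have hsum : gsum d y = (Complex.exp (((2 * π * y : ℝ)) * Complex.I) - 1) / (ω - 1) := by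
      rw [gsum, Finset.sum_congr rfl (fun j _ => hterm j), geom_sum_eq hω1]
      congr 2
      rw [hω, ← Complex.exp_nat_mul]
      congr 1
      push_cast; field_simp
    have hsin : Real.sin (π * y / d) ≠ 0 := by
      intro h
      rw [Real.sin_eq_zero_iff] at h
      obtain ⟨n, hn⟩ := h
      apply hy
      refine ⟨n, ?_⟩
      field_simp at hn
      have h2 : π * y = π * ((n:ℝ)*d) := by rw [← hn]
      exact mul_left_cancel₀ hπ h2
    rw [hsum, sins, if_neg hy, map_div₀]
    rw [show ((2 * π * y : ℝ)) = (2 * (π * y)) by ring, normSq_exp_sub_one,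
        normSq_exp_sub_one]
    rw [show (2 * (π * y)) / 2 = π * y by ring, show (2 * π * y / d) / 2 = π * y / d by ring]
    field_simp

private lemma my_inner_sum (d : ℕ) (hd : 0 < d) (x : ℝ) (j j' : ℕ) (hj : j < d) (hj' : j' < d) :
    ∑ k ∈ Finset.range d,
      Complex.exp (((2 * π * (x - k) * j / d - 2 * π * (x - k) * j' / d : ℝ)) * Complex.I)
      = if j = j' then (d : ℂ) else 0 := by
  have hdR : (d : ℝ) ≠ 0 := Nat.cast_ne_zero.mpr hd.ne'
  have hdC : (d : ℂ) ≠ 0 := Nat.cast_ne_zero.mpr hd.ne'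
  have hπ : π ≠ 0 := Real.pi_ne_zero
  by_cases h : j = j'
  · subst h
    simp
  · rw [if_neg h]
    set ζ : ℂ := Complex.exp (((-2 * π * ((j:ℝ) - j') / d : ℝ)) * Complex.I) with hζ
    set C : ℂ := Complex.exp (((2 * π * x * ((j:ℝ) - j') / d : ℝ)) * Complex.I) with hC
    have hterm : ∀ k : ℕ,
        Complex.exp (((2 * π * (x - k) * j / d - 2 * π * (x - k) * j' / d : ℝ)) * Complex.I)
        = C * ζ ^ k := by
      intro k
      rw [hζ, hC, ← Complex.exp_nat_mul, ← Complex.exp_add]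
      congr 1
      push_cast; ring
    have hζ1 : ζ ≠ 1 := by
      intro hone
      rw [Complex.exp_eq_one_iff] at hone
      obtain ⟨n, hn⟩ := hone
      have h2 : ((-2 * π * ((j:ℝ) - j') / d : ℝ) : ℂ) = ((2 * π * n : ℝ) : ℂ) := by
        apply mul_right_cancel₀ Complex.I_ne_zero
        rw [hn]; push_cast; ring
      have h3 : -2 * π * ((j:ℝ) - j') / d = 2 * π * n := by exact_mod_cast h2
      have h4 : (j:ℝ) - j' = -(n:ℝ) * d := by
        field_simp at h3
        have := mul_left_cancel₀ (show (2*π) ≠ 0 by positivity)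
          (show (2*π) * ((j:ℝ) - j') = (2*π) * (-(n:ℝ)*d) by linear_combination (-2*π) * h3)
        linarith [this]
      have h5 : (j:ℤ) - j' = -n * d := by exact_mod_cast h4
      have hne : (j:ℤ) - j' ≠ 0 := by
        intro h0; apply h; omega
      have hdvd : (d:ℤ) ∣ |(j:ℤ) - j'| := (dvd_abs _ _).mpr ⟨-n, by rw [h5]; ring⟩
      have h6 : (d:ℤ) ≤ |(j:ℤ) - j'| := Int.le_of_dvd (abs_pos.mpr hne) hdvd
      have h7 : |(j:ℤ) - j'| < d := by
        rw [abs_lt]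
        constructor <;> [omega; omega]
      omega
    have hζd : ζ ^ d = 1 := by
      rw [hζ, ← Complex.exp_nat_mul]
      rw [show (d:ℂ) * (((-2 * π * ((j:ℝ) - j') / d : ℝ)) * Complex.I)
          = (((j':ℤ) - j : ℤ) : ℂ) * (2 * π * Complex.I) by push_cast; field_simp; ring]
      exact Complex.exp_int_mul_two_pi_mul_I _
    rw [Finset.sum_congr rfl (fun k _ => hterm k), ← Finset.mul_sum, geom_sum_eq hζ1, hζd]
    simp

private lemma sum_normSq_gsum (d : ℕ) (hd : 0 < d) (x : ℝ) :
    ∑ k ∈ Finset.range d, (Complex.normSq (gsum d (x - k)) : ℂ) = (d:ℂ)^2 := by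
  have expand : ∀ k : ℕ, (Complex.normSq (gsum d (x - k)) : ℂ)
      = ∑ j ∈ Finset.range d, ∑ j' ∈ Finset.range d,
          Complex.exp (((2 * π * (x - k) * j / d - 2 * π * (x - k) * j' / d : ℝ)) * Complex.I) := by
    intro k
    rw [← Complex.mul_conj, gsum, map_sum, Finset.sum_mul_sum]
    refine Finset.sum_congr rfl fun j _ => Finset.sum_congr rfl fun j' _ => ?_
    rw [← Complex.exp_conj, ← Complex.exp_add]
    congr 1
    rw [map_mul, Complex.conj_ofReal, Complex.conj_I]
    push_cast; ring
  calc ∑ k ∈ Finset.range d, (Complex.normSq (gsum d (x - k)) : ℂ)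
      = ∑ k ∈ Finset.range d, ∑ j ∈ Finset.range d, ∑ j' ∈ Finset.range d,
          Complex.exp (((2 * π * (x - k) * j / d - 2 * π * (x - k) * j' / d : ℝ)) * Complex.I) :=
        Finset.sum_congr rfl fun k _ => expand k
    _ = ∑ j ∈ Finset.range d, ∑ j' ∈ Finset.range d, ∑ k ∈ Finset.range d,
          Complex.exp (((2 * π * (x - k) * j / d - 2 * π * (x - k) * j' / d : ℝ)) * Complex.I) := by
        rw [Finset.sum_comm]
        exact Finset.sum_congr rfl fun j _ => Finset.sum_comm
    _ = ∑ j ∈ Finset.range d, ∑ j' ∈ Finset.range d, if j = j' then (d:ℂ) else 0 := by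
        refine Finset.sum_congr rfl fun j hj => Finset.sum_congr rfl fun j' hj' => ?_
        exact my_inner_sum d hd x j j' (Finset.mem_range.mp hj) (Finset.mem_range.mp hj')
    _ = ∑ j ∈ Finset.range d, (d:ℂ) := by
        refine Finset.sum_congr rfl fun j hj => ?_
        rw [Finset.sum_ite_eq (Finset.range d) j (fun _ => (d:ℂ)), if_pos hj]
    _ = (d:ℂ)^2 := by simp; ring

/-- The POVM elements of phase estimation sum to identity eigenvalue-wise:
`∑_{k=0}^{d-1} sins_d²(x − k) = 1`. -/
theorem sins_sq_sum_eq_one (d : ℕ) (hd : 0 < d) (x : ℝ) :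
    ∑ k ∈ Finset.range d, (sins d (x - k)) ^ 2 = 1 := by
  have hdR : (d : ℝ) ≠ 0 := Nat.cast_ne_zero.mpr hd.ne'
  have hB : ∑ k ∈ Finset.range d, Complex.normSq (gsum d (x - k)) = (d:ℝ)^2 := by
    exact_mod_cast sum_normSq_gsum d hd x
  have hA : ∀ k ∈ Finset.range d, (sins d (x - k)) ^ 2
      = Complex.normSq (gsum d (x - k)) / (d:ℝ)^2 := by
    intro k _
    rw [← sins_sq_eq d hd]
    field_simp
  rw [Finset.sum_congr rfl hA, ← Finset.sum_div, hB]
  field_simp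
end

section
/- For any integer Δ ≥ 1 and any real x with |x| ≤ Δ: ∑_{|δ| ≤ Δ, δ ∈ ℤ} sinc²(x − δ) ≥ 1 − 2/(π²·(Δ − |x| + 1/2)). -/
open Real

/-- `sinc x = sin(πx)/(πx)`, with `sinc 0 = 1`. -/
noncomputable def sinc (x : ℝ) : ℝ :=
  if x = 0 then 1 else Real.sin (Real.pi * x) / (Real.pi * x)

open Finset

set_option maxHeartbeats 1000000

private lemma poly_aux {a : ℝ} (h0 : 0 ≤ a) (h1 : a ≤ 2.9) :
    1 ≤ (1-a/16)^2*(1-a/8)^2*(1+a) := by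
  nlinarith [mul_nonneg (by linarith : (0:ℝ) ≤ 2.9 - a) (by linarith : (0:ℝ) ≤ 3409.281 - 656.11*a),
    mul_nonneg (mul_nonneg (by linarith : (0:ℝ) ≤ 2.9 - a) (sq_nonneg a)) (by linarith : (0:ℝ) ≤ 44.1 - a)]

private lemma sin_lb {t : ℝ} (h0 : 0 < t) (h1 : t ≤ 1.7) :
    t * ((1 - t^2/16) * (1 - t^2/8)) ≤ Real.sin t := by
  have ht2 : t^2 ≤ 2.89 := by nlinarith
  have h2 : Real.sin t = 2 * Real.sin (t/2) * Real.cos (t/2) := by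
    rw [← Real.sin_two_mul]; ring_nf
  have hs : t/2 - (t/2)^3/4 < Real.sin (t/2) :=
    lt_of_le_of_lt (by nlinarith [pow_pos h0 3]) (Real.sin_gt_sub_cube (by linarith))
  have hc : 1 - (t/2)^2/2 ≤ Real.cos (t/2) := Real.one_sub_sq_div_two_le_cos
  have hs0 : (0:ℝ) < t/2 - (t/2)^3/4 := by nlinarith
  have hc0 : (0:ℝ) < 1 - (t/2)^2/2 := by nlinarith
  calc t * ((1 - t^2/16) * (1 - t^2/8)) = 2 * (t/2 - (t/2)^3/4) * (1 - (t/2)^2/2) := by ring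
  _ ≤ 2 * Real.sin (t/2) * Real.cos (t/2) :=
      mul_le_mul (by linarith) hc hc0.le (by linarith)
  _ = Real.sin t := h2.symm

private lemma key_ineq {t : ℝ} (h0 : 0 < t) (h1 : t ≤ 1.7) :
    t^2 ≤ Real.sin t ^ 2 * (1 + t^2) ∧ 0 < Real.sin t := by
  have ht2 : t^2 ≤ 2.89 := by nlinarith
  have h := sin_lb h0 h1
  have hb0 : (0:ℝ) < t * ((1 - t^2/16) * (1 - t^2/8)) :=
    mul_pos h0 (mul_pos (by linarith) (by linarith))
  refine ⟨?_, lt_of_lt_of_le hb0 h⟩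
  have hsq : (t * ((1 - t^2/16) * (1 - t^2/8)))^2 ≤ Real.sin t ^2 :=
    pow_le_pow_left₀ hb0.le h 2
  have hf := poly_aux (sq_nonneg t) (by linarith : t^2 ≤ 2.9)
  calc t^2 ≤ t^2 * ((1-t^2/16)^2*(1-t^2/8)^2*(1+t^2)) := by nlinarith [sq_nonneg t]
  _ = (t*((1-t^2/16)*(1-t^2/8)))^2 * (1+t^2) := by ring
  _ ≤ Real.sin t^2 * (1+t^2) := mul_le_mul_of_nonneg_right hsq (by positivity)

private lemma step_id {u : ℝ} (hs : Real.sin u ≠ 0) (hc : Real.cos u ≠ 0) :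
    (Real.sin u ^ 2)⁻¹ + (Real.cos u ^ 2)⁻¹ = 4 * (Real.sin (2*u) ^ 2)⁻¹ := by
  rw [Real.sin_two_mul]
  have h := Real.sin_sq_add_cos_sq u
  field_simp
  nlinarith [h]

private lemma bisect (m : ℕ) (y : ℝ) (hy : ∀ j : ℤ, y ≠ j) :
    ∑ k ∈ range (2^m), (Real.sin (π * (y + k) / 2^m) ^ 2)⁻¹
      = ((2:ℝ)^m)^2 * (Real.sin (π * y) ^ 2)⁻¹ := by
  induction m generalizing y with
  | zero => simp
  | succ m ih =>
    have key : ∀ k : ℕ, (Real.sin (π * (y + k) / 2^(m+1)) ^ 2)⁻¹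
        + (Real.sin (π * (y + ((2^m + k : ℕ) : ℝ)) / 2^(m+1)) ^ 2)⁻¹
        = 4 * (Real.sin (π * (y + k) / 2^m) ^ 2)⁻¹ := by
      intro k
      set u := π * (y + k) / 2^(m+1) with hu
      have h2u : 2 * u = π * (y + k) / 2^m := by
        rw [hu]; field_simp; ring
      have hsu : Real.sin u ≠ 0 := by
        intro h
        rcases Real.sin_eq_zero_iff.1 h with ⟨j, hj⟩
        have h1 : π * ((y + k) / 2^(m+1)) = π * j := by
          rw [hu] at hj; linear_combination -hj
        have h2 := mul_left_cancel₀ Real.pi_ne_zero h1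
        apply hy (j * 2^(m+1) - k)
        have h3 : y + k = (j:ℝ) * 2^(m+1) := by
          field_simp at h2; linarith
        push_cast
        linarith
      have hcu : Real.cos u ≠ 0 := by
        intro h
        rcases Real.cos_eq_zero_iff.1 h with ⟨j, hj⟩
        have h1 : π * ((y + k) / 2^(m+1)) = π * ((2*j+1)/2) := by
          rw [hu] at hj; linear_combination hj
        have h2 := mul_left_cancel₀ Real.pi_ne_zero h1
        apply hy ((2*j+1) * 2^m - k)
        have h3 : y + k = ((2*j+1):ℝ) * 2^m := by
          field_simp at h2; linear_combination h2 / 2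
        push_cast
        push_cast at h3
        linarith
      have hang : π * (y + ((2^m + k : ℕ) : ℝ)) / 2^(m+1) = u + π/2 := by
        rw [hu]; push_cast; field_simp; ring
      rw [hang, Real.sin_add_pi_div_two, ← h2u]
      exact step_id hsu hcu
    have hsplit : (2:ℕ)^(m+1) = 2^m + 2^m := by ring
    rw [hsplit, Finset.sum_range_add, ← Finset.sum_add_distrib,
      Finset.sum_congr rfl (fun k _ => key k), ← Finset.mul_sum, ih y hy]
    push_cast
    ring

private lemma sum_Ioc_eq_range (g : ℤ → ℝ) (a : ℤ) (n : ℕ) :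
    ∑ δ ∈ Finset.Ioc (a-1) (a-1+n), g δ = ∑ k ∈ Finset.range n, g (a+k) := by
  induction n with
  | zero => simp
  | succ n ihn =>
    have hins : Finset.Ioc (a-1) (a-1+((n:ℤ)+1)) =
        insert (a+n) (Finset.Ioc (a-1) (a-1+n)) := by
      ext z; simp only [Finset.mem_Ioc, Finset.mem_insert]; omega
    push_cast
    rw [hins, Finset.sum_insert (by simp [Finset.mem_Ioc]), ihn, Finset.sum_range_succ]
    ring

private lemma sin_sq_add_int (z : ℝ) (j : ℤ) : Real.sin (π*(z + j))^2 = Real.sin (π*z)^2 := by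
  have h0 : Real.sin ((j:ℝ)*π) = 0 := Real.sin_int_mul_pi j
  have h1 : Real.cos ((j:ℝ)*π)^2 = 1 := by nlinarith [Real.sin_sq_add_cos_sq ((j:ℝ)*π)]
  have h2 : π*(z + j) = π*z + (j:ℝ)*π := by ring
  rw [h2, Real.sin_add, h0]
  nlinarith [h1]

private lemma sin_pi_ne {y : ℝ} (hy : ∀ j : ℤ, y ≠ j) : Real.sin (π * y) ≠ 0 := by
  intro h
  rcases Real.sin_eq_zero_iff.1 h with ⟨j, hj⟩
  have h1 : π * (y - j) = 0 := by linear_combination -hj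
  rcases mul_eq_zero.1 h1 with h2 | h2
  · exact Real.pi_ne_zero h2
  · exact hy j (by linarith)

private lemma term_bound {x : ℝ} {n : ℝ} (hn : 0 < n) {w : ℝ} (hw : w ≠ 0)
    (ht : π * |w| / n ≤ 1.7) :
    Real.sin (π*x)^2 / (n^2 * Real.sin (π*w/n)^2) ≤
      Real.sin (π*x)^2 / (π^2*w^2) + 1/n^2 := by
  set S := Real.sin (π*x)^2 with hS
  set t := π * |w| / n with htdef
  have hπ := Real.pi_pos
  have hwa : 0 < |w| := abs_pos.2 hw
  have ht0 : 0 < t := by positivity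
  obtain ⟨hk, hsin⟩ := key_ineq ht0 ht
  have hsq : Real.sin (π*w/n)^2 = Real.sin t ^2 := by
    rcases abs_cases w with ⟨h1, _⟩ | ⟨h1, _⟩
    · rw [htdef, h1]
    · rw [htdef, h1]
      have h3 : π * w / n = -(π * -w / n) := by ring
      rw [h3, Real.sin_neg]; ring
  have hA : 0 < n^2 * Real.sin (π*w/n)^2 := by
    rw [hsq]; positivity
  set A := n^2 * Real.sin (π*w/n)^2 with hAdef
  have hP : 0 < π^2 * w^2 := by positivity
  have e1 : n * t = π * |w| := by rw [htdef]; field_simp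
  have e2 : n^2 * t^2 = π^2 * w^2 := by
    calc n^2*t^2 = (n*t)^2 := by ring
    _ = (π*|w|)^2 := by rw [e1]
    _ = π^2*w^2 := by rw [mul_pow, sq_abs]
  have keyP : π^2*w^2 ≤ A * (1 + t^2) := by
    rw [hAdef, hsq, ← e2]
    calc n^2 * t^2 ≤ n^2 * (Real.sin t^2 * (1+t^2)) := by
          apply mul_le_mul_of_nonneg_left hk (by positivity)
    _ = n^2 * Real.sin t^2 * (1+t^2) := by ring
  have hS0 : 0 ≤ S := sq_nonneg _
  have hS1 : S ≤ 1 := Real.sin_sq_le_one _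
  rw [div_add_div _ _ (ne_of_gt hP) (by positivity : (n:ℝ)^2 ≠ 0),
    div_le_div_iff₀ hA (by positivity)]
  calc S * (π^2*w^2 * n^2) = S*n^2*(π^2*w^2) := by ring
  _ ≤ S*n^2*(A*(1+t^2)) := by
      apply mul_le_mul_of_nonneg_left keyP (by positivity)
  _ = S*n^2*A + S*A*(n^2*t^2) := by ring
  _ = S*n^2*A + S*A*(π^2*w^2) := by rw [e2]
  _ ≤ S*n^2*A + 1*A*(π^2*w^2) := by
      nlinarith [mul_nonneg (mul_nonneg (sub_nonneg.2 hS1) hA.le) hP.le]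
  _ = (S*n^2 + π^2*w^2*1)*A := by ring

private lemma frac_le {S q e : ℝ} (hS0 : 0 ≤ S) (hS1 : S ≤ 1) (hq : 0 < q) (hqe : q ≤ e) :
    S/(π^2*e) ≤ (1/π^2) * q⁻¹ := by
  have hπ := Real.pi_pos
  have he : 0 < e := lt_of_lt_of_le hq hqe
  have h1 : (1/π^2) * q⁻¹ = 1/(π^2*q) := by
    field_simp
  rw [h1, div_le_div_iff₀ (by positivity) (by positivity)]
  nlinarith [mul_le_mul_of_nonneg_right hS1 (mul_nonneg (sq_nonneg π) hq.le),
    mul_le_mul_of_nonneg_left hqe (sq_nonneg π)]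

private lemma sum_F (m : ℕ) {x : ℝ} (hxZ : ∀ j : ℤ, x ≠ j) (a : ℤ) :
    ∑ k ∈ range (2^m),
      Real.sin (π*x)^2 / (((2:ℝ)^m)^2 * Real.sin (π*(x - (a+k))/(2:ℝ)^m)^2) = 1 := by
  set y : ℝ := (a:ℝ) - x with hy0
  have hy : ∀ j : ℤ, y ≠ j := by
    intro j h
    exact hxZ (a - j) (by push_cast; rw [hy0] at h; linarith)
  have hterm : ∀ k : ℕ, Real.sin (π*(x - (a+k))/(2:ℝ)^m)^2
      = Real.sin (π*(y+k)/(2:ℝ)^m)^2 := by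
    intro k
    have h3 : π*(x - ((a:ℝ)+k))/(2:ℝ)^m = -(π*(y+k)/(2:ℝ)^m) := by rw [hy0]; ring
    rw [h3, Real.sin_neg]; ring
  have hSy : Real.sin (π*y)^2 = Real.sin (π*x)^2 := by
    have h4 : π * y = π * (-x + a) := by rw [hy0]; ring
    rw [h4, sin_sq_add_int (-x) a]
    rw [show π * -x = -(π*x) by ring, Real.sin_neg]; ring
  have hSne : Real.sin (π*x)^2 ≠ 0 := by
    have := sin_pi_ne hxZ
    positivity
  calc ∑ k ∈ range (2^m),
      Real.sin (π*x)^2 / (((2:ℝ)^m)^2 * Real.sin (π*(x - (a+k))/(2:ℝ)^m)^2)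
      = ∑ k ∈ range (2^m), (Real.sin (π*x)^2/((2:ℝ)^m)^2)
          * (Real.sin (π*(y+k)/(2:ℝ)^m)^2)⁻¹ := by
        refine Finset.sum_congr rfl fun k _ => ?_
        rw [hterm k, div_mul_eq_div_div, div_eq_mul_inv]
  _ = (Real.sin (π*x)^2/((2:ℝ)^m)^2) * (((2:ℝ)^m)^2 * (Real.sin (π*y)^2)⁻¹) := by
        rw [← Finset.mul_sum, bisect m y hy]
  _ = 1 := by
        rw [hSy]
        field_simp
        exact div_self (sin_pi_ne hxZ)


/-- Lower bound on the sinc² series over a window of radius `Δ` around `x`. -/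
theorem sinc_sq_sum_lower_bound (Δ : ℤ) (hΔ : 1 ≤ Δ) (x : ℝ) (hx : |x| ≤ (Δ : ℝ)) :
    1 - 2 / (Real.pi ^ 2 * ((Δ : ℝ) - |x| + 1/2)) ≤
      ∑ δ ∈ Finset.Icc (-Δ) Δ, (_root_.sinc (x - δ)) ^ 2 := by
  have hπ := Real.pi_pos
  have hDpos : (0:ℝ) < (Δ:ℝ) - |x| + 1/2 := by linarith
  by_cases hxint : ∃ j : ℤ, x = (j:ℝ)
  · obtain ⟨j, rfl⟩ := hxint
    have hxabs := abs_le.1 hx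
    have hj : j ∈ Finset.Icc (-Δ) Δ := by
      rw [Finset.mem_Icc]
      constructor <;> [exact_mod_cast (by push_cast; linarith : ((-Δ:ℤ):ℝ) ≤ (j:ℝ));
        exact_mod_cast hxabs.2]
    have h1 : (1:ℝ) ≤ ∑ δ ∈ Finset.Icc (-Δ) Δ, (_root_.sinc ((j:ℝ) - δ))^2 := by
      have h2 := Finset.single_le_sum (f := fun δ : ℤ => (_root_.sinc ((j:ℝ) - δ))^2)
        (fun i _ => sq_nonneg _) hj
      simpa [_root_.sinc] using h2
    have h3 : 0 < 2 / (π^2 * ((Δ:ℝ) - |(j:ℝ)| + 1/2)) :=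
      div_pos (by norm_num) (mul_pos (by positivity) hDpos)
    linarith
  · push_neg at hxint
    have hxabs := abs_le.1 hx
    have hwne : ∀ δ : ℤ, x - (δ:ℝ) ≠ 0 := fun δ h => hxint δ (by linarith)
    set D : ℝ := (Δ:ℝ) - |x| + 1/2 with hDdef
    set W := ∑ δ ∈ Finset.Icc (-Δ) Δ, (_root_.sinc (x - δ))^2 with hWdef
    suffices hsuff : ∀ m : ℕ, 2*Δ + 8 ≤ 2^m → 1 - 2/(π^2*D) - ((2:ℝ)^m)⁻¹ ≤ W by
      by_contra hcon
      push_neg at hcon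
      have hε : 0 < 1 - 2/(π^2*D) - W := by linarith
      obtain ⟨m, hm⟩ := pow_unbounded_of_one_lt
        (max (((2*Δ+8 : ℤ)):ℝ) (1/(1 - 2/(π^2*D) - W))) (by norm_num : (1:ℝ) < 2)
      have hm1 : ((2*Δ+8 : ℤ):ℝ) < (2:ℝ)^m := lt_of_le_of_lt (le_max_left _ _) hm
      have hm2 : 1/(1 - 2/(π^2*D) - W) < (2:ℝ)^m := lt_of_le_of_lt (le_max_right _ _) hm
      have hmz : 2*Δ + 8 ≤ 2^m := by
        have h5 : ((2*Δ+8 : ℤ):ℝ) < (((2:ℤ)^m : ℤ):ℝ) := by push_cast; push_cast at hm1; linarith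
        exact_mod_cast h5.le
      have h2m : (0:ℝ) < (2:ℝ)^m := by positivity
      have hinv : ((2:ℝ)^m)⁻¹ < 1 - 2/(π^2*D) - W := by
        have h := (div_lt_iff₀ hε).mp hm2
        calc ((2:ℝ)^m)⁻¹ = ((2:ℝ)^m)⁻¹ * 1 := by ring
        _ < ((2:ℝ)^m)⁻¹ * ((2:ℝ)^m * (1 - 2/(π^2*D) - W)) :=
            mul_lt_mul_of_pos_left h (inv_pos.2 h2m)
        _ = 1 - 2/(π^2*D) - W := by field_simp
      have := hsuff m hmz
      linarith
    intro m hm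
    -- opaque setup
    obtain ⟨NZ, hNr, hmN⟩ : ∃ N : ℤ, ((N:ℝ) = (2:ℝ)^m ∧ 2*Δ+8 ≤ N) :=
      ⟨2^m, by push_cast; ring, hm⟩
    have hNZ10 : (10:ℤ) ≤ NZ := by omega
    obtain ⟨c, hcxl⟩ : ∃ c : ℤ, -(1/2 : ℝ) ≤ x - c ∧ x - c ≤ 1/2 :=
      ⟨round x, abs_le.1 (abs_sub_round x)⟩
    have hcΔ1 : -Δ ≤ c := by
      have h1 : ((-Δ - 1 : ℤ):ℝ) < (c:ℝ) := by push_cast; linarith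
      have h2 : -Δ - 1 < c := by exact_mod_cast h1
      omega
    have hcΔ2 : c ≤ Δ := by
      have h1 : (c:ℝ) < ((Δ + 1 : ℤ):ℝ) := by push_cast; linarith
      have h2 : c < Δ + 1 := by exact_mod_cast h1
      omega
    obtain ⟨a, hadef⟩ : ∃ a : ℤ, a = c - NZ := ⟨_, rfl⟩
    obtain ⟨b, hbdef⟩ : ∃ b : ℤ, b = c + NZ - 1 := ⟨_, rfl⟩
    obtain ⟨n, hndef⟩ : ∃ n : ℝ, n = (2:ℝ)^(m+1) := ⟨_, rfl⟩
    have hn2N : n = 2*(NZ:ℝ) := by rw [hndef, pow_succ, ← hNr]; ring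
    have hNZr : (10:ℝ) ≤ (NZ:ℝ) := by exact_mod_cast hNZ10
    have hnpos : (0:ℝ) < n := by rw [hn2N]; linarith
    set F : ℤ → ℝ := fun δ => Real.sin (π*x)^2 / (n^2 * Real.sin (π*(x - δ)/n)^2) with hFdef
    have haR : (a:ℝ) = (c:ℝ) - (NZ:ℝ) := by rw [hadef]; push_cast; ring
    have hbR : (b:ℝ) = (c:ℝ) + (NZ:ℝ) - 1 := by rw [hbdef]; push_cast; ring
    -- identity
    have hNZ2 : ((2^(m+1) : ℕ) : ℤ) = 2 * NZ := by
      have h5 : (((2:ℕ)^(m+1):ℕ):ℝ) = ((2*NZ : ℤ):ℝ) := by push_cast [hNr]; ring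
      exact_mod_cast h5
    have htop : a - 1 + ((2^(m+1) : ℕ) : ℤ) = b := by rw [hNZ2]; omega
    have hid : ∑ δ ∈ Finset.Ioc (a-1) b, F δ = 1 := by
      rw [← htop, sum_Ioc_eq_range F a (2^(m+1)), ← sum_F (m+1) hxint a]
      refine Finset.sum_congr rfl fun k _ => ?_
      simp only [hFdef, hndef]
      push_cast
      rfl
    -- boundaries
    have hb1 : a - 1 ≤ -Δ - 1 := by omega
    have hb2 : (-Δ-1 : ℤ) ≤ Δ := by omega
    have hb3 : Δ ≤ b := by omega
    have hd2 : Disjoint (Finset.Ioc (-Δ-1 : ℤ) Δ) (Finset.Ioc Δ b) := by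
      apply Finset.disjoint_left.2
      intro z h1 h2
      rw [Finset.mem_Ioc] at h1 h2
      omega
    have hd1 : Disjoint (Finset.Ioc (a-1) (-Δ-1 : ℤ)) (Finset.Ioc (-Δ-1 : ℤ) b) := by
      apply Finset.disjoint_left.2
      intro z h1 h2
      rw [Finset.mem_Ioc] at h1 h2
      omega
    have hsplit : ∑ δ ∈ Finset.Ioc (a-1) b, F δ
        = ∑ δ ∈ Finset.Ioc (a-1) (-Δ-1 : ℤ), F δ
          + (∑ δ ∈ Finset.Ioc (-Δ-1 : ℤ) Δ, F δ + ∑ δ ∈ Finset.Ioc Δ b, F δ) := by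
      rw [← Finset.sum_union hd2, Finset.Ioc_union_Ioc_eq_Ioc hb2 hb3,
        ← Finset.sum_union hd1, Finset.Ioc_union_Ioc_eq_Ioc hb1 (hb2.trans hb3)]
    -- t bound
    have htb : ∀ δ ∈ Finset.Ioc (a-1) b, π * |x - (δ:ℝ)| / n ≤ 1.7 := by
      intro δ hδ
      rw [Finset.mem_Ioc] at hδ
      have hδ1 : (a:ℝ) ≤ (δ:ℝ) := by exact_mod_cast (by omega : a ≤ δ)
      have hδ2 : ((δ:ℝ)) ≤ (b:ℝ) := by exact_mod_cast hδ.2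
      have habs : |x - (δ:ℝ)| ≤ (NZ:ℝ) + 1/2 := by
        rw [abs_le]
        constructor
        · rw [hbR] at hδ2; linarith [hcxl.1]
        · rw [haR] at hδ1; linarith [hcxl.2]
      rw [div_le_iff₀ hnpos, hn2N]
      nlinarith [Real.pi_lt_d2, abs_nonneg (x - (δ:ℝ)),
        mul_le_mul_of_nonneg_left habs Real.pi_pos.le]
    -- window bound
    have hIccIoc : Finset.Icc (-Δ) Δ = Finset.Ioc (-Δ-1 : ℤ) Δ := by
      ext z; rw [Finset.mem_Icc, Finset.mem_Ioc]; omega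
    have hwin : ∀ δ ∈ Finset.Ioc (-Δ-1 : ℤ) Δ, F δ ≤ (_root_.sinc (x - δ))^2 + 1/n^2 := by
      intro δ hδ
      rw [Finset.mem_Ioc] at hδ
      have hmem : δ ∈ Finset.Ioc (a-1) b := by rw [Finset.mem_Ioc]; omega
      have h1 := term_bound (x := x) hnpos (hwne δ) (htb δ hmem)
      have h2 : Real.sin (π*x)^2 / (π^2*(x - (δ:ℝ))^2) = (_root_.sinc (x - δ))^2 := by
        rw [_root_.sinc, if_neg (hwne δ), div_pow, mul_pow]
        congr 1
        have h3 : π * (x - (δ:ℝ)) = π * (x + ((-δ : ℤ):ℝ)) := by push_cast; ring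
        rw [h3, sin_sq_add_int]
      calc F δ ≤ Real.sin (π*x)^2 / (π^2*(x - (δ:ℝ))^2) + 1/n^2 := h1
      _ = (_root_.sinc (x - δ))^2 + 1/n^2 := by rw [h2]
    have hWseg : ∑ δ ∈ Finset.Ioc (-Δ-1 : ℤ) Δ, F δ
        ≤ (∑ δ ∈ Finset.Ioc (-Δ-1 : ℤ) Δ, (_root_.sinc (x - δ))^2)
          + ((Finset.Ioc (-Δ-1 : ℤ) Δ).card : ℝ) * (1/n^2) := by
      calc ∑ δ ∈ Finset.Ioc (-Δ-1 : ℤ) Δ, F δ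
          ≤ ∑ δ ∈ Finset.Ioc (-Δ-1 : ℤ) Δ, ((_root_.sinc (x - δ))^2 + 1/n^2) :=
            Finset.sum_le_sum hwin
      _ = _ := by rw [Finset.sum_add_distrib, Finset.sum_const, nsmul_eq_mul]
    -- right tail
    set G : ℤ → ℝ := fun δ => ((δ:ℝ) - x - 1/2)⁻¹ with hGdef
    have hright : ∀ δ ∈ Finset.Ioc Δ b, F δ ≤ (1/π^2) * (G δ - G (δ+1)) + 1/n^2 := by
      intro δ hδ
      rw [Finset.mem_Ioc] at hδ
      have hmem : δ ∈ Finset.Ioc (a-1) b := by rw [Finset.mem_Ioc]; omega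
      have hdl : ((Δ:ℝ)) + 1 ≤ (δ:ℝ) := by exact_mod_cast (by omega : Δ + 1 ≤ δ)
      have hd1 : (1:ℝ) ≤ (δ:ℝ) - x := by linarith [hxabs.2]
      have h1 := term_bound (x := x) hnpos (hwne δ) (htb δ hmem)
      have hgd : G δ - G (δ+1) = (((δ:ℝ) - x)^2 - 1/4)⁻¹ := by
        simp only [hGdef]
        have e1 : (δ:ℝ) - x - 1/2 ≠ 0 := by linarith
        have e2 : ((δ:ℝ)+1) - x - 1/2 ≠ 0 := by linarith
        have e3 : ((δ:ℝ) - x)^2 - 1/4 ≠ 0 := by nlinarith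
        push_cast
        rw [inv_sub_inv e1 e2, div_eq_iff (mul_ne_zero e1 e2), inv_mul_eq_div,
          eq_div_iff e3]
        ring
      have hq : (0:ℝ) < ((δ:ℝ) - x)^2 - 1/4 := by nlinarith
      have hS1 : Real.sin (π*x)^2 ≤ 1 := Real.sin_sq_le_one _
      have hS0 : (0:ℝ) ≤ Real.sin (π*x)^2 := sq_nonneg _
      have h2 : Real.sin (π*x)^2/(π^2*(x - (δ:ℝ))^2) ≤ (1/π^2)*(G δ - G (δ+1)) := by
        rw [hgd]
        exact frac_le hS0 hS1 hq (by nlinarith)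
      calc F δ ≤ Real.sin (π*x)^2/(π^2*(x - (δ:ℝ))^2) + 1/n^2 := h1
      _ ≤ (1/π^2) * (G δ - G (δ+1)) + 1/n^2 := by linarith
    have htelr : ∑ δ ∈ Finset.Ioc Δ b, (G δ - G (δ+1)) = G (Δ+1) - G (b+1) := by
      obtain ⟨L, hL⟩ : ∃ L : ℕ, (L:ℤ) = b - Δ := ⟨(b-Δ).toNat, Int.toNat_of_nonneg (by omega)⟩
      have h0 : Finset.Ioc Δ b = Finset.Ioc ((Δ+1) - 1) ((Δ+1) - 1 + (L:ℤ)) := by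
        congr 1 <;> omega
      rw [h0, sum_Ioc_eq_range (fun δ => G δ - G (δ+1)) (Δ+1) L]
      have h1 : ∀ k ∈ Finset.range L, G (Δ+1+(k:ℤ)) - G (Δ+1+(k:ℤ)+1)
          = (fun j : ℕ => G (Δ+1+(j:ℤ))) k - (fun j : ℕ => G (Δ+1+(j:ℤ))) (k+1) := by
        intro k _
        simp only
        congr 2
        push_cast
        ring
      rw [Finset.sum_congr rfl h1, Finset.sum_range_sub' (fun j : ℕ => G (Δ+1+(j:ℤ)))]
      have e1 : Δ+1+((0:ℕ):ℤ) = Δ+1 := by simp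
      have e2 : Δ+1+(L:ℤ) = b+1 := by omega
      rw [e1, e2]
    have hSR : ∑ δ ∈ Finset.Ioc Δ b, F δ
        ≤ (1/π^2) * D⁻¹ + ((Finset.Ioc Δ b).card : ℝ) * (1/n^2) := by
      have hg1 : 0 ≤ G (b+1) := by
        simp only [hGdef]
        apply inv_nonneg.2
        have hbx : (Δ:ℝ) ≤ (b:ℝ) := by exact_mod_cast hb3
        push_cast
        linarith [hxabs.2]
      have hg2 : G (Δ+1) ≤ D⁻¹ := by
        simp only [hGdef]
        apply inv_anti₀ hDpos
        rw [hDdef]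
        push_cast
        linarith [le_abs_self x]
      have hp2 : (0:ℝ) ≤ 1/π^2 := by positivity
      calc ∑ δ ∈ Finset.Ioc Δ b, F δ
          ≤ ∑ δ ∈ Finset.Ioc Δ b, ((1/π^2) * (G δ - G (δ+1)) + 1/n^2) :=
            Finset.sum_le_sum hright
      _ = (1/π^2) * (G (Δ+1) - G (b+1)) + ((Finset.Ioc Δ b).card : ℝ) * (1/n^2) := by
          rw [Finset.sum_add_distrib, ← Finset.mul_sum, htelr, Finset.sum_const, nsmul_eq_mul]
      _ ≤ (1/π^2) * D⁻¹ + ((Finset.Ioc Δ b).card : ℝ) * (1/n^2) := by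
          have h7 : G (Δ+1) - G (b+1) ≤ D⁻¹ := by linarith
          have h8 := mul_le_mul_of_nonneg_left h7 hp2
          linarith
    -- left tail
    set G2 : ℤ → ℝ := fun δ => (x - (δ:ℝ) - 1/2)⁻¹ with hG2def
    have hleft : ∀ δ ∈ Finset.Ioc (a-1) (-Δ-1 : ℤ), F δ ≤ (1/π^2) * (G2 δ - G2 (δ-1)) + 1/n^2 := by
      intro δ hδ
      rw [Finset.mem_Ioc] at hδ
      have hmem : δ ∈ Finset.Ioc (a-1) b := by rw [Finset.mem_Ioc]; omega
      have hdl : (δ:ℝ) ≤ -(Δ:ℝ) - 1 := by exact_mod_cast hδ.2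
      have hd1 : (1:ℝ) ≤ x - (δ:ℝ) := by linarith [hxabs.1]
      have h1 := term_bound (x := x) hnpos (hwne δ) (htb δ hmem)
      have hgd : G2 δ - G2 (δ-1) = ((x - (δ:ℝ))^2 - 1/4)⁻¹ := by
        simp only [hG2def]
        have e1 : x - (δ:ℝ) - 1/2 ≠ 0 := by linarith
        have e2 : x - ((δ:ℝ)-1) - 1/2 ≠ 0 := by linarith
        have e3 : (x - (δ:ℝ))^2 - 1/4 ≠ 0 := by nlinarith
        push_cast
        rw [inv_sub_inv e1 e2, div_eq_iff (mul_ne_zero e1 e2), inv_mul_eq_div,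
          eq_div_iff e3]
        ring
      have hq : (0:ℝ) < (x - (δ:ℝ))^2 - 1/4 := by nlinarith
      have hS1 : Real.sin (π*x)^2 ≤ 1 := Real.sin_sq_le_one _
      have hS0 : (0:ℝ) ≤ Real.sin (π*x)^2 := sq_nonneg _
      have h2 : Real.sin (π*x)^2/(π^2*(x - (δ:ℝ))^2) ≤ (1/π^2)*(G2 δ - G2 (δ-1)) := by
        rw [hgd]
        exact frac_le hS0 hS1 hq (by nlinarith)
      calc F δ ≤ Real.sin (π*x)^2/(π^2*(x - (δ:ℝ))^2) + 1/n^2 := h1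
      _ ≤ (1/π^2) * (G2 δ - G2 (δ-1)) + 1/n^2 := by linarith
    have htell : ∑ δ ∈ Finset.Ioc (a-1) (-Δ-1 : ℤ), (G2 δ - G2 (δ-1)) = G2 (-Δ-1) - G2 (a-1) := by
      obtain ⟨L, hL⟩ : ∃ L : ℕ, (L:ℤ) = -Δ-1-(a-1) := ⟨(-Δ-1-(a-1)).toNat, Int.toNat_of_nonneg (by omega)⟩
      have h0 : Finset.Ioc (a-1) (-Δ-1 : ℤ) = Finset.Ioc (a-1) (a-1 + (L:ℤ)) := by
        congr 1
        omega
      rw [h0, sum_Ioc_eq_range (fun δ => G2 δ - G2 (δ-1)) a L]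
      have h1 : ∀ k ∈ Finset.range L, G2 (a+(k:ℤ)) - G2 (a+(k:ℤ)-1)
          = (fun j : ℕ => G2 (a+(j:ℤ)-1)) (k+1) - (fun j : ℕ => G2 (a+(j:ℤ)-1)) k := by
        intro k _
        simp only
        congr 2
        push_cast
        ring
      rw [Finset.sum_congr rfl h1, Finset.sum_range_sub (fun j : ℕ => G2 (a+(j:ℤ)-1))]
      have e1 : a+((0:ℕ):ℤ)-1 = a-1 := by simp
      have e2 : a+(L:ℤ)-1 = -Δ-1 := by omega
      rw [e1, e2]
    have hSL : ∑ δ ∈ Finset.Ioc (a-1) (-Δ-1 : ℤ), F δ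
        ≤ (1/π^2) * D⁻¹ + ((Finset.Ioc (a-1) (-Δ-1 : ℤ)).card : ℝ) * (1/n^2) := by
      have hg1 : 0 ≤ G2 (a-1) := by
        simp only [hG2def]
        apply inv_nonneg.2
        have hax : (a:ℝ) ≤ -(Δ:ℝ) - 1 := by exact_mod_cast (by omega : a ≤ -Δ-1)
        push_cast
        linarith [hxabs.1]
      have hg2 : G2 (-Δ-1) ≤ D⁻¹ := by
        simp only [hG2def]
        apply inv_anti₀ hDpos
        rw [hDdef]
        push_cast
        linarith [neg_abs_le x]
      have hp2 : (0:ℝ) ≤ 1/π^2 := by positivity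
      calc ∑ δ ∈ Finset.Ioc (a-1) (-Δ-1 : ℤ), F δ
          ≤ ∑ δ ∈ Finset.Ioc (a-1) (-Δ-1 : ℤ), ((1/π^2) * (G2 δ - G2 (δ-1)) + 1/n^2) :=
            Finset.sum_le_sum hleft
      _ = (1/π^2) * (G2 (-Δ-1) - G2 (a-1))
            + ((Finset.Ioc (a-1) (-Δ-1 : ℤ)).card : ℝ) * (1/n^2) := by
          rw [Finset.sum_add_distrib, ← Finset.mul_sum, htell, Finset.sum_const, nsmul_eq_mul]
      _ ≤ _ := by
          have h7 : G2 (-Δ-1) - G2 (a-1) ≤ D⁻¹ := by linarith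
          have h8 := mul_le_mul_of_nonneg_left h7 hp2
          linarith
    -- cards
    have hcard : ((Finset.Ioc (a-1) (-Δ-1 : ℤ)).card : ℝ)
        + ((Finset.Ioc (-Δ-1 : ℤ) Δ).card : ℝ) + ((Finset.Ioc Δ b).card : ℝ) = 2*(NZ:ℝ) := by
      rw [Int.card_Ioc, Int.card_Ioc, Int.card_Ioc]
      have h1 : ((-Δ-1) - (a-1)).toNat + (Δ - (-Δ-1)).toNat + (b - Δ).toNat = (2*NZ).toNat := by
        omega
      have h2 : (((2*NZ).toNat : ℕ) : ℝ) = 2*(NZ:ℝ) := by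
        have h3 := Int.toNat_of_nonneg (show (0:ℤ) ≤ 2*NZ by omega)
        have h4 : (((2*NZ).toNat : ℤ) : ℝ) = ((2*NZ : ℤ) : ℝ) := by rw [h3]
        push_cast at h4 ⊢
        linarith
      calc (((((-Δ-1) - (a-1)).toNat  : ℕ)): ℝ) + ((Δ - (-Δ-1)).toNat : ℝ) + ((b - Δ).toNat : ℝ)
          = ((((-Δ-1) - (a-1)).toNat + (Δ - (-Δ-1)).toNat + (b - Δ).toNat : ℕ) : ℝ) := by
            push_cast; ring
      _ = (((2*NZ).toNat : ℕ) : ℝ) := by rw [h1]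
      _ = 2*(NZ:ℝ) := h2
    have herr : 2*(NZ:ℝ) * (1/n^2) ≤ ((2:ℝ)^m)⁻¹ := by
      rw [← hNr, hn2N]
      have hNpos : (0:ℝ) < (NZ:ℝ) := by linarith
      have h9 : 2*(NZ:ℝ)*(1/(2*(NZ:ℝ))^2) = (2*(NZ:ℝ))⁻¹ := by field_simp
      rw [h9]
      have := inv_anti₀ hNpos (by linarith : (NZ:ℝ) ≤ 2*(NZ:ℝ))
      linarith
    -- combine
    have hW' : ∑ δ ∈ Finset.Ioc (-Δ-1 : ℤ) Δ, (_root_.sinc (x - δ))^2 = W := by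
      rw [hWdef, hIccIoc]
    have hBsum : (1/π^2) * D⁻¹ + (1/π^2) * D⁻¹ = 2/(π^2*D) := by
      rw [eq_div_iff (by positivity : π^2*D ≠ 0)]
      field_simp
      norm_num
    have herr2 : ((Finset.Ioc (a-1) (-Δ-1 : ℤ)).card : ℝ) * (1/n^2)
        + ((Finset.Ioc (-Δ-1 : ℤ) Δ).card : ℝ) * (1/n^2)
        + ((Finset.Ioc Δ b).card : ℝ) * (1/n^2) ≤ ((2:ℝ)^m)⁻¹ := by
      calc ((Finset.Ioc (a-1) (-Δ-1 : ℤ)).card : ℝ) * (1/n^2)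
          + ((Finset.Ioc (-Δ-1 : ℤ) Δ).card : ℝ) * (1/n^2)
          + ((Finset.Ioc Δ b).card : ℝ) * (1/n^2)
          = (((Finset.Ioc (a-1) (-Δ-1 : ℤ)).card : ℝ)
            + ((Finset.Ioc (-Δ-1 : ℤ) Δ).card : ℝ) + ((Finset.Ioc Δ b).card : ℝ)) * (1/n^2) := by
            ring
      _ = 2*(NZ:ℝ) * (1/n^2) := by rw [hcard]
      _ ≤ ((2:ℝ)^m)⁻¹ := herr
    have hfin := hid
    rw [hsplit] at hfin
    linarith [hSL, hWseg, hSR, herr2, hW', hBsum, hfin]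
end

section
/- For any integer Δ ≥ 1, any real c > 1, and any real x with |x| ≥ Δ + c: ∑_{|δ| ≤ Δ, δ ∈ ℤ} sinc²(x − δ) < 2/(π²·(c − 1)). -/
open Real

lemma sinc_neg (y : ℝ) : _root_.sinc (-y) = _root_.sinc y := by
  unfold _root_.sinc
  rcases eq_or_ne y 0 with h | h
  · simp [h]
  · rw [if_neg (by simpa using h), if_neg h]
    rw [mul_neg, Real.sin_neg]
    ring

lemma telescope (x : ℝ) (n : ℕ) :
    ∑ δ ∈ Finset.Icc (-(n:ℤ)) (n:ℤ), (1/(x - δ - 1) - 1/(x - δ))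
      = 1/(x - n - 1) - 1/(x + n) := by
  induction n with
  | zero => norm_num
  | succ m ih =>
    have h1 : Finset.Icc (-((m:ℤ)+1)) ((m:ℤ)+1) =
        insert (-((m:ℤ)+1)) (insert ((m:ℤ)+1) (Finset.Icc (-(m:ℤ)) (m:ℤ))) := by
      ext a
      simp only [Finset.mem_insert, Finset.mem_Icc]
      omega
    push_cast
    rw [h1, Finset.sum_insert (by simp only [Finset.mem_insert, Finset.mem_Icc]; omega),
      Finset.sum_insert (by simp only [Finset.mem_Icc]; omega), ih]
    push_cast
    ring

lemma main_pos (Δ : ℤ) (hΔ : 1 ≤ Δ) (c : ℝ) (hc : 1 < c)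
    (x : ℝ) (hx : (Δ : ℝ) + c ≤ x) :
    ∑ δ ∈ Finset.Icc (-Δ) Δ, (_root_.sinc (x - δ)) ^ 2 < 2 / (Real.pi ^ 2 * (c - 1)) := by
  have hπ : (0:ℝ) < Real.pi ^ 2 := by positivity
  have hc1 : (0:ℝ) < c - 1 := by linarith
  have hΔR : (1:ℝ) ≤ (Δ:ℝ) := by exact_mod_cast hΔ
  have step : ∀ δ ∈ Finset.Icc (-Δ) Δ,
      (_root_.sinc (x - δ)) ^ 2 ≤ (1/Real.pi^2) * (1/(x - δ - 1) - 1/(x - δ)) := by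
    intro δ hδ
    rw [Finset.mem_Icc] at hδ
    have hδR : (δ:ℝ) ≤ (Δ:ℝ) := by exact_mod_cast hδ.2
    set y := x - (δ:ℝ) with hy
    have hyc : c ≤ y := by simp only [hy]; linarith
    have hy1 : 0 < y - 1 := by linarith
    have hy0 : 0 < y := by linarith
    have hne : y ≠ 0 := ne_of_gt hy0
    have h1 : _root_.sinc y ^ 2 = Real.sin (Real.pi * y) ^ 2 / (Real.pi ^ 2 * y ^ 2) := by
      rw [_root_.sinc, if_neg hne, div_pow, mul_pow]
    have h2 : Real.sin (Real.pi * y) ^ 2 ≤ 1 := by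
      have := Real.neg_one_le_sin (Real.pi * y)
      have := Real.sin_le_one (Real.pi * y)
      nlinarith
    have h3 : _root_.sinc y ^ 2 ≤ 1 / (Real.pi ^ 2 * y ^ 2) := by
      rw [h1]
      apply div_le_div_of_nonneg_right h2 (by positivity) |>.trans_eq rfl
    have h4 : 1/(x - δ - 1) - 1/(x - δ) = 1/((y-1)*y) := by
      rw [← hy]
      field_simp
      ring
    have h5 : (1:ℝ) / (y^2) ≤ 1 / ((y-1)*y) := by
      apply one_div_le_one_div_of_le (by positivity)
      nlinarith
    rw [h4]
    calc _root_.sinc y ^ 2 ≤ 1 / (Real.pi ^ 2 * y ^ 2) := h3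
      _ = (1/Real.pi^2) * (1/y^2) := (one_div_mul_one_div _ _).symm
      _ ≤ (1/Real.pi^2) * (1/((y-1)*y)) := by
          apply mul_le_mul_of_nonneg_left h5 (by positivity)
  have hsum := Finset.sum_le_sum step
  have hΔt : ((Δ.toNat : ℤ)) = Δ := Int.toNat_of_nonneg (by omega)
  have hΔr : ((Δ.toNat : ℕ) : ℝ) = (Δ : ℝ) := by exact_mod_cast hΔt
  rw [← Finset.mul_sum, ← hΔt, telescope x Δ.toNat, hΔr, hΔt] at hsum
  have hxΔ1 : c - 1 ≤ x - Δ - 1 := by linarith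
  have hxΔ : (0:ℝ) < x + Δ := by linarith
  have h6 : 1/(x - Δ - 1) - 1/(x + Δ) < 2/(c-1) := by
    have ha : 1/(x - Δ - 1) ≤ 1/(c-1) := one_div_le_one_div_of_le hc1 hxΔ1
    have hb : (0:ℝ) < 1/(x + Δ) := by positivity
    have hcpos : (0:ℝ) < 1/(c-1) := by positivity
    calc 1/(x - Δ - 1) - 1/(x + Δ) < 1/(x - Δ - 1) := by linarith
      _ ≤ 1/(c-1) := ha
      _ < 2/(c-1) := by rw [div_lt_div_iff₀ hc1 hc1]; nlinarith
  calc ∑ δ ∈ Finset.Icc (-Δ) Δ, (_root_.sinc (x - δ)) ^ 2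
      ≤ (1/Real.pi^2) * (1/(x - Δ - 1) - 1/(x + Δ)) := hsum
    _ < (1/Real.pi^2) * (2/(c-1)) := by
        apply mul_lt_mul_of_pos_left h6 (by positivity)
    _ = 2 / (Real.pi ^ 2 * (c - 1)) := by
        field_simp

/-- Tail upper bound on the sinc² series: if `|x| ≥ Δ + c` with `c > 1` then
`∑_{|δ| ≤ Δ} sinc²(x − δ) < 2/(π²(c − 1))`. -/
theorem sinc_sq_sum_upper_bound (Δ : ℤ) (hΔ : 1 ≤ Δ) (c : ℝ) (hc : 1 < c)
    (x : ℝ) (hx : (Δ : ℝ) + c ≤ |x|) :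
    ∑ δ ∈ Finset.Icc (-Δ) Δ, (_root_.sinc (x - δ)) ^ 2 < 2 / (Real.pi ^ 2 * (c - 1)) := by
  rcases abs_cases x with ⟨h1, h2⟩ | ⟨h1, h2⟩
  · exact main_pos Δ hΔ c hc x (h1 ▸ hx)
  · have hx' : (Δ : ℝ) + c ≤ -x := h1 ▸ hx
    have key : ∑ δ ∈ Finset.Icc (-Δ) Δ, (_root_.sinc (x - δ)) ^ 2
        = ∑ δ ∈ Finset.Icc (-Δ) Δ, (_root_.sinc (-x - δ)) ^ 2 := by
      apply Finset.sum_nbij' (fun δ => -δ) (fun δ => -δ)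
      · intro a ha; simp only [Finset.mem_Icc] at *; omega
      · intro a ha; simp only [Finset.mem_Icc] at *; omega
      · intro a _; ring
      · intro a _; ring
      · intro a _
        push_cast
        rw [show x - a = -(-x - (-a)) by ring, _root_.sinc_neg]
    rw [key]
    exact main_pos Δ hΔ c hc (-x) hx'
end
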